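/- Let (C, e) be a canonical extension of a bounded distributive lattice A, and let f : C → C be a monotone, closed Esakia map such that f(e a) is closed in C for every a ∈ A. Then for every completely meet-prime element m of C, ■_f(m) = sSup { e a | a ∈ A, f(e a) ≤ m }. In particular ■_f(m) is an open element of C. (Identity (14) established in the proof of Proposition 3.6.) -/

import Mathlib

/-- An element is completely join-prime. -/
def CJPrime {C : Type*} [CompleteLattice C] (j : C) : Prop :=
  j ≠ ⊥ ∧ ∀ S : Set C, j ≤ sSup S → ∃ s ∈ S, j ≤ s

/-- An element is completely meet-prime. -/
def CMPrime {C : Type*} [CompleteLattice C] (m : C) : Prop :=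
  m ≠ ⊤ ∧ ∀ S : Set C, sInf S ≤ m → ∃ s ∈ S, s ≤ m

/-- ◇_f(u) = ⋁ { f j | j completely join-prime, j ≤ u }. -/
def diam {C D : Type*} [CompleteLattice C] [CompleteLattice D]
    (f : C → D) (u : C) : D :=
  sSup (f '' {j | CJPrime j ∧ j ≤ u})

/-- ■_f(v) = ⋁ { j | j completely join-prime, f j ≤ v }. -/
def bsq {C D : Type*} [CompleteLattice C] [CompleteLattice D]
    (f : C → D) (v : D) : C :=
  sSup {j | CJPrime j ∧ f j ≤ v}

/-- □_g(u) = ⋀ { g m | m completely meet-prime, u ≤ m }. -/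
def boxg {C D : Type*} [CompleteLattice C] [CompleteLattice D]
    (g : C → D) (u : C) : D :=
  sInf (g '' {m | CMPrime m ∧ u ≤ m})

/-- ◆_g(v) = ⋀ { m | m completely meet-prime, v ≤ g m }. -/
def bdiam {C D : Type*} [CompleteLattice C] [CompleteLattice D]
    (g : C → D) (v : D) : C :=
  sInf {m | CMPrime m ∧ v ≤ g m}

/-- Every element is the sup of the completely join-primes below it. -/
def JoinPerfect (C : Type*) [CompleteLattice C] : Prop :=
  ∀ u : C, u = sSup {j | CJPrime j ∧ j ≤ u}

/-- Every element is the inf of the completely meet-primes above it. -/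
def MeetPerfect (C : Type*) [CompleteLattice C] : Prop :=
  ∀ u : C, u = sInf {m | CMPrime m ∧ u ≤ m}

/-- `(C, e)` is a canonical extension of the bounded distributive lattice `A`. -/
structure IsCanonicalExtension {A C : Type*} [DistribLattice A] [BoundedOrder A]
    [CompleteLattice C] (e : A → C) : Prop where
  injective : Function.Injective e
  map_bot : e ⊥ = ⊥
  map_top : e ⊤ = ⊤
  map_inf : ∀ a b : A, e (a ⊓ b) = e a ⊓ e b
  map_sup : ∀ a b : A, e (a ⊔ b) = e a ⊔ e b
  dense_joinOfMeets : ∀ u : C, ∃ 𝒮 : Set (Set A),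
      u = sSup ((fun S => sInf (e '' S)) '' 𝒮)
  dense_meetOfJoins : ∀ u : C, ∃ 𝒮 : Set (Set A),
      u = sInf ((fun S => sSup (e '' S)) '' 𝒮)
  compact : ∀ S T : Set A, sInf (e '' S) ≤ sSup (e '' T) →
      ∃ F : Finset A, ↑F ⊆ S ∧ ∃ G : Finset A, ↑G ⊆ T ∧ F.inf id ≤ G.sup id

/-- Closed elements of the canonical extension: meets of subsets of `e(A)`. -/
def ClosedElem {A C : Type*} [CompleteLattice C] (e : A → C) (x : C) : Prop :=
  ∃ S : Set A, x = sInf (e '' S)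

/-- Open elements of the canonical extension: joins of subsets of `e(A)`. -/
def OpenElem {A C : Type*} [CompleteLattice C] (e : A → C) (x : C) : Prop :=
  ∃ S : Set A, x = sSup (e '' S)

/-- Nonempty downward-directed family. -/
def DownDir {C : Type*} [Preorder C] (𝒞 : Set C) : Prop :=
  𝒞.Nonempty ∧ ∀ x ∈ 𝒞, ∀ y ∈ 𝒞, ∃ z ∈ 𝒞, z ≤ x ∧ z ≤ y

/-- Nonempty upward-directed family. -/
def UpDir {C : Type*} [Preorder C] (𝒪 : Set C) : Prop :=
  𝒪.Nonempty ∧ ∀ x ∈ 𝒪, ∀ y ∈ 𝒪, ∃ z ∈ 𝒪, x ≤ z ∧ y ≤ z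

/-- `h` preserves down-directed meets of closed elements. -/
def ClosedEsakia {A C D : Type*} [CompleteLattice C] [CompleteLattice D]
    (e : A → C) (h : C → D) : Prop :=
  ∀ 𝒞 : Set C, DownDir 𝒞 → (∀ c ∈ 𝒞, ClosedElem e c) →
    h (sInf 𝒞) = sInf (h '' 𝒞)

/-- `h` preserves up-directed joins of open elements. -/
def OpenEsakia {A C D : Type*} [CompleteLattice C] [CompleteLattice D]
    (e : A → C) (h : C → D) : Prop :=
  ∀ 𝒪 : Set C, UpDir 𝒪 → (∀ o ∈ 𝒪, OpenElem e o) →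
    h (sSup 𝒪) = sSup (h '' 𝒪)

section Aux

open Order

variable {A C : Type*} [DistribLattice A] [BoundedOrder A] [CompleteLattice C]
variable {e : A → C}

lemma e_mono (hce : IsCanonicalExtension e) : Monotone e := fun a b hab =>
  inf_eq_left.mp (by rw [← hce.map_inf, inf_eq_left.mpr hab])

lemma e_finsetSup_le (hce : IsCanonicalExtension e) {T : Set A} (G : Finset A)
    (hG : ↑G ⊆ T) : e (G.sup id) ≤ sSup (e '' T) := by
  classical
  induction G using Finset.induction_on with
  | empty => simp [hce.map_bot]
  | @insert a G ha ih =>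
      rw [Finset.sup_insert, hce.map_sup]
      refine sup_le (le_sSup ⟨a, hG (by simp), rfl⟩) (ih fun x hx => hG (by simp [hx]))

lemma finsetInf_not_mem (J : Order.Ideal A) (hJ : J.IsPrime) (F : Finset A)
    (hF : ↑F ⊆ ((J : Set A))ᶜ) : F.inf id ∉ J := by
  classical
  induction F using Finset.induction_on with
  | empty => simpa using hJ.toIsProper.top_notMem
  | @insert a F ha ih =>
      intro h
      rw [Finset.inf_insert] at h
      rcases hJ.mem_or_mem h with h1 | h2
      · exact hF (by simp) h1
      · exact ih (fun x hx => hF (by simp [hx])) h2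

lemma finsetSup_mem (J : Order.Ideal A) (G : Finset A) (hG : ↑G ⊆ (J : Set A)) :
    G.sup id ∈ J := by
  classical
  induction G using Finset.induction_on with
  | empty => simpa using J.bot_mem
  | @insert a G ha ih =>
      rw [Finset.sup_insert]
      exact J.sup_mem (hG (by simp)) (ih fun x hx => hG (by simp [hx]))

lemma jelem_prime (hce : IsCanonicalExtension e) (J : Order.Ideal A) (hJ : J.IsPrime)
    (S : Set C) (h : sInf (e '' ((J : Set A))ᶜ) ≤ sSup S) :
    ∃ s ∈ S, sInf (e '' ((J : Set A))ᶜ) ≤ s := by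
  by_contra hc
  push_neg at hc
  have key : sSup S ≤ sSup (e '' (J : Set A)) := by
    refine sSup_le fun s hs => ?_
    obtain ⟨𝒮, h𝒮⟩ := hce.dense_joinOfMeets s
    rw [h𝒮]
    refine sSup_le ?_
    rintro c ⟨S', hS', rfl⟩
    have hcs : sInf (e '' S') ≤ s := h𝒮 ▸ le_sSup ⟨S', hS', rfl⟩
    have hnc : ¬ sInf (e '' ((J : Set A))ᶜ) ≤ sInf (e '' S') :=
      fun hle => hc s hs (hle.trans hcs)
    have hex : ∃ a ∈ S', a ∈ J := by
      by_contra h'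
      push_neg at h'
      refine hnc (le_sInf ?_)
      rintro _ ⟨a, ha, rfl⟩
      exact sInf_le ⟨a, h' a ha, rfl⟩
    obtain ⟨a, haS, haJ⟩ := hex
    exact le_trans (sInf_le ⟨a, haS, rfl⟩) (le_sSup ⟨a, haJ, rfl⟩)
  obtain ⟨F, hF, G, hG, hFG⟩ := hce.compact _ _ (h.trans key)
  exact (finsetInf_not_mem J hJ F hF) (J.lower hFG (finsetSup_mem J G hG))

lemma separation (hce : IsCanonicalExtension e) (a : A) (v : C) (hv : ¬ e a ≤ v) :
    ∃ j : C, CJPrime j ∧ j ≤ e a ∧ ¬ j ≤ v := by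
  classical
  obtain ⟨𝒮, h𝒮⟩ := hce.dense_meetOfJoins v
  have hex : ∃ T ∈ 𝒮, ¬ e a ≤ sSup (e '' T) := by
    by_contra h'
    push_neg at h'
    refine hv (h𝒮 ▸ le_sInf ?_)
    rintro _ ⟨T, hT, rfl⟩
    exact h' T hT
  obtain ⟨T, hT𝒮, hnay⟩ := hex
  have hvy : v ≤ sSup (e '' T) := h𝒮 ▸ sInf_le ⟨T, hT𝒮, rfl⟩
  have hIsIdeal : Order.IsIdeal {b : A | ∃ G : Finset A, ↑G ⊆ T ∧ b ≤ G.sup id} := by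
    refine ⟨?_, ⟨⊥, ∅, by simp⟩, ?_⟩
    · rintro x y hxy ⟨G, hG, hx⟩; exact ⟨G, hG, hxy.trans hx⟩
    · rintro x ⟨G1, hG1, hx⟩ y ⟨G2, hG2, hy⟩
      refine ⟨x ⊔ y, ⟨G1 ∪ G2, ?_, sup_le (hx.trans (Finset.sup_mono Finset.subset_union_left))
        (hy.trans (Finset.sup_mono Finset.subset_union_right))⟩, le_sup_left, le_sup_right⟩
      rw [Finset.coe_union]
      exact Set.union_subset hG1 hG2
  set I : Order.Ideal A := hIsIdeal.toIdeal with hI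
  have hIy : ∀ b ∈ I, e b ≤ sSup (e '' T) := by
    rintro b ⟨G, hG, hb⟩
    exact (e_mono hce hb).trans (e_finsetSup_le hce G hG)
  have hdisj : Disjoint ((Order.PFilter.principal a : Order.PFilter A) : Set A) (I : Set A) := by
    rw [Set.disjoint_left]
    intro c hc hcI
    have haI : a ∈ I := I.lower hc hcI
    exact hnay (hIy a haI)
  obtain ⟨J, hJprime, hIJ, hdisjJ⟩ := DistribLattice.prime_ideal_of_disjoint_filter_ideal hdisj
  have haJ : a ∉ J := fun h =>
    Set.disjoint_left.mp hdisjJ (Order.PFilter.mem_principal.mpr le_rfl) h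
  have hjy : ¬ sInf (e '' ((J : Set A))ᶜ) ≤ sSup (e '' T) := by
    intro h
    obtain ⟨F, hF, G, hG, hFG⟩ := hce.compact _ _ h
    have hGJ : G.sup id ∈ J := Order.Ideal.mem_of_mem_of_le (show G.sup id ∈ I from ⟨G, hG, le_rfl⟩) hIJ
    exact finsetInf_not_mem J hJprime F hF (J.lower hFG hGJ)
  refine ⟨sInf (e '' ((J : Set A))ᶜ), ⟨?_, fun S hS => jelem_prime hce J hJprime S hS⟩,
    sInf_le ⟨a, haJ, rfl⟩, fun h => hjy (h.trans hvy)⟩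
  intro hbot
  exact hjy (hbot ▸ bot_le)

end Aux

/-- Identity (14) from the proof of Proposition 3.6: for every completely
meet-prime `m`, `■_f m = ⋁ { e a | a ∈ A, f (e a) ≤ m }`; in particular
`■_f m` is an open element. -/
theorem stmt16 {A C : Type*} [DistribLattice A] [BoundedOrder A] [CompleteLattice C]
    (e : A → C) (hce : IsCanonicalExtension e)
    (f : C → C) (hf : Monotone f) (hfcE : ClosedEsakia e f)
    (hcl : ∀ a : A, ClosedElem e (f (e a))) :
    ∀ m : C, CMPrime m →
      bsq f m = sSup (e '' {a : A | f (e a) ≤ m}) ∧ OpenElem e (bsq f m) := by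
  intro m hm
  have key : bsq f m = sSup (e '' {a : A | f (e a) ≤ m}) := by
    apply le_antisymm
    · refine sSup_le ?_
      rintro j ⟨hjp, hjm⟩
      obtain ⟨𝒮, h𝒮⟩ := hce.dense_joinOfMeets j
      obtain ⟨c, hc, hjc⟩ := hjp.2 _ (le_of_eq h𝒮)
      obtain ⟨S, hS, rfl⟩ := hc
      have hcj : sInf (e '' S) ≤ j := h𝒮 ▸ le_sSup ⟨S, hS, rfl⟩
      have hjeq : j = sInf (e '' S) := le_antisymm hjc hcj
      have hjB : j = sInf (e '' {b : A | j ≤ e b}) := by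
        refine le_antisymm (le_sInf ?_) ?_
        · rintro _ ⟨b, hb, rfl⟩; exact hb
        · refine le_trans (sInf_le_sInf (Set.image_mono (f := e) ?_)) hjeq.ge
          intro b hb
          exact hjeq ▸ sInf_le ⟨b, hb, rfl⟩
      have hdd : DownDir (e '' {b : A | j ≤ e b}) := by
        refine ⟨⟨e ⊤, ⟨⊤, ?_, rfl⟩⟩, ?_⟩
        · show j ≤ e ⊤
          rw [hce.map_top]; exact le_top
        · rintro _ ⟨b1, hb1, rfl⟩ _ ⟨b2, hb2, rfl⟩
          refine ⟨e (b1 ⊓ b2), ⟨b1 ⊓ b2, ?_, rfl⟩, ?_, ?_⟩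
          · show j ≤ e (b1 ⊓ b2)
            rw [hce.map_inf]; exact le_inf hb1 hb2
          · rw [hce.map_inf]; exact inf_le_left
          · rw [hce.map_inf]; exact inf_le_right
      have hclB : ∀ c ∈ e '' {b : A | j ≤ e b}, ClosedElem e c := by
        rintro _ ⟨b, hb, rfl⟩
        exact ⟨{b}, by simp⟩
      have hfj : f j = sInf (f '' (e '' {b : A | j ≤ e b})) := by
        conv_lhs => rw [hjB]
        exact hfcE _ hdd hclB
      have hinfm : sInf (f '' (e '' {b : A | j ≤ e b})) ≤ m := hfj ▸ hjm
      obtain ⟨x, hx, hxm⟩ := hm.2 _ hinfm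
      obtain ⟨_, ⟨b, hb, rfl⟩, rfl⟩ := hx
      exact le_trans hb (le_sSup ⟨b, hxm, rfl⟩)
    · refine sSup_le ?_
      rintro _ ⟨a, ha, rfl⟩
      by_contra hna
      obtain ⟨j, hjp, hja, hjv⟩ := separation hce a _ hna
      exact hjv (le_sSup ⟨hjp, (hf hja).trans ha⟩)
  exact ⟨key, ⟨_, key⟩⟩
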